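/- arXiv:2409.00715 — 2 statements merged into one kernel-verified Lean document; each statement's English description precedes it below -/
import Mathlib

section
/- For a, b real with 0 < a ≤ b, the inequality ∫₀¹ (a/(4√t)) log((b + a√t)/(b − a√t)) dt ≤ (a²/b)·log 2 holds. -/
open MeasureTheory Set

private lemma neg_log_le_aux {v : ℝ} (hv : 0 < v) : -Real.log v ≤ 2 / Real.sqrt v := by
  have h0 : 0 < Real.sqrt v := Real.sqrt_pos.2 hv
  have h1 : Real.log (1 / Real.sqrt v) ≤ 1 / Real.sqrt v - 1 :=
    Real.log_le_sub_one_of_pos (by positivity)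
  rw [Real.log_div one_ne_zero h0.ne', Real.log_one, Real.log_sqrt hv.le] at h1
  have h2 : (0:ℝ) < 1 / Real.sqrt v := by positivity
  have : -((1:ℝ)/2 * Real.log v) ≤ 1 / Real.sqrt v := by linarith
  calc -Real.log v = 2 * -((1:ℝ)/2 * Real.log v) := by ring
    _ ≤ 2 * (1 / Real.sqrt v) := by linarith
    _ = 2 / Real.sqrt v := by ring

private lemma key_log_ineq {x s : ℝ} (hx0 : 0 < x) (hx1 : x ≤ 1) (hs0 : 0 ≤ s) (hs1 : s < 1) :
    Real.log (1 + x * s) - Real.log (1 - x * s) ≤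
      x * (Real.log (1 + s) - Real.log (1 - s)) := by
  set F : ℝ → ℝ := fun y =>
    x * (Real.log (1 + y) - Real.log (1 - y)) -
      (Real.log (1 + x * y) - Real.log (1 - x * y)) with hF
  have hder : ∀ y ∈ Icc 0 s, HasDerivAt F
      (x * (1/(1+y) - (-1)/(1-y)) - ((x*1)/(1+x*y) - (-(x*1))/(1-x*y))) y := by
    intro y hy
    obtain ⟨hy0, hys⟩ := hy
    have hy1 : y < 1 := lt_of_le_of_lt hys hs1
    have hxy1 : x * y < 1 := by nlinarith
    have hp : (0:ℝ) < 1 + y := by linarith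
    have hq : (0:ℝ) < 1 - y := by linarith
    have hr : (0:ℝ) < 1 + x * y := by nlinarith
    have hw : (0:ℝ) < 1 - x * y := by linarith
    have h1 : HasDerivAt (fun y : ℝ => Real.log (1 + y)) (1/(1+y)) y :=
      ((hasDerivAt_id y).const_add 1).log hp.ne'
    have h2 : HasDerivAt (fun y : ℝ => Real.log (1 - y)) ((-1)/(1-y)) y :=
      ((hasDerivAt_id y).const_sub 1).log hq.ne'
    have h3 : HasDerivAt (fun y : ℝ => Real.log (1 + x * y)) ((x*1)/(1+x*y)) y :=
      (((hasDerivAt_id y).const_mul x).const_add 1).log hr.ne'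
    have h4 : HasDerivAt (fun y : ℝ => Real.log (1 - x * y)) ((-(x*1))/(1-x*y)) y :=
      (((hasDerivAt_id y).const_mul x).const_sub 1).log hw.ne'
    exact ((h1.sub h2).const_mul x).sub (h3.sub h4)
  have hmono : MonotoneOn F (Icc 0 s) := by
    apply monotoneOn_of_deriv_nonneg (convex_Icc 0 s)
    · exact fun y hy => (hder y hy).continuousAt.continuousWithinAt
    · intro y hy
      rw [interior_Icc] at hy
      exact (hder y (mem_Icc_of_Ioo hy)).differentiableAt.differentiableWithinAt
    · intro y hy
      rw [interior_Icc] at hy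
      rw [(hder y (mem_Icc_of_Ioo hy)).deriv]
      obtain ⟨hy0, hys⟩ := hy
      have hy1 : y < 1 := hys.trans hs1
      have hxy1 : x * y < 1 := by nlinarith
      have hp : (0:ℝ) < 1 + y := by linarith
      have hq : (0:ℝ) < 1 - y := by linarith
      have hr : (0:ℝ) < 1 + x * y := by nlinarith
      have hw : (0:ℝ) < 1 - x * y := by linarith
      have e1 : x * (1/(1+y) - (-1)/(1-y)) = 2*x/((1+y)*(1-y)) := by
        field_simp; ring
      have e2 : (x*1)/(1+x*y) - (-(x*1))/(1-x*y) = 2*x/((1+x*y)*(1-x*y)) := by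
        field_simp; ring
      have hden : (1+y)*(1-y) ≤ (1+x*y)*(1-x*y) := by
        nlinarith [mul_nonneg (mul_nonneg (sub_nonneg.2 hx1)
          (by linarith : (0:ℝ) ≤ 1+x)) (sq_nonneg y)]
      rw [e1, e2, sub_nonneg, div_le_div_iff₀ (by positivity) (by positivity)]
      nlinarith [mul_le_mul_of_nonneg_left hden (by positivity : (0:ℝ) ≤ 2*x)]
  have h0 : F 0 = 0 := by simp [hF]
  have hs : F 0 ≤ F s := hmono ⟨le_refl 0, hs0⟩ ⟨hs0, le_refl s⟩ hs0
  rw [h0] at hs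
  simp only [hF] at hs
  linarith

private lemma sqrt_lt_one' {t : ℝ} (ht1 : t < 1) : Real.sqrt t < 1 := by
  rcases le_or_gt t 0 with h | h
  · calc Real.sqrt t = 0 := Real.sqrt_eq_zero_of_nonpos h
      _ < 1 := one_pos
  · rw [show (1:ℝ) = Real.sqrt 1 by rw [Real.sqrt_one]]
    exact Real.sqrt_lt_sqrt h.le ht1

private lemma f'_integrable :
    IntervalIntegrable
      (fun t => 1/(4*Real.sqrt t) * Real.log ((1+Real.sqrt t)/(1-Real.sqrt t)))
      volume (0:ℝ) 1 := by
  have h1 : IntervalIntegrable (fun t : ℝ => t ^ (-(1/2) : ℝ)) volume 0 1 :=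
    intervalIntegral.intervalIntegrable_rpow' (by norm_num)
  have h2 : IntervalIntegrable (fun t : ℝ => (1-t) ^ (-(1/2) : ℝ)) volume 0 1 := by
    have := h1.comp_sub_left 1
    simpa using this.symm
  have hg : IntervalIntegrable
      (fun t : ℝ => 2 * (t ^ (-(1/2) : ℝ) + (1-t) ^ (-(1/2) : ℝ))) volume 0 1 :=
    (h1.add h2).const_mul 2
  apply hg.mono_fun'
  · -- measurability
    have hco : ContinuousOn
        (fun t => 1/(4*Real.sqrt t) * Real.log ((1+Real.sqrt t)/(1-Real.sqrt t)))
        (Ioo (0:ℝ) 1) := by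
      intro t ht
      obtain ⟨ht0, ht1⟩ := ht
      have hs0 : 0 < Real.sqrt t := Real.sqrt_pos.2 ht0
      have hs1 : Real.sqrt t < 1 := sqrt_lt_one' ht1
      have h1m : (0:ℝ) < 1 - Real.sqrt t := by linarith
      have h1p : (0:ℝ) < 1 + Real.sqrt t := by positivity
      apply ContinuousWithinAt.mul
      · apply ContinuousWithinAt.div continuousWithinAt_const
        · exact (continuous_const.mul Real.continuous_sqrt).continuousWithinAt
        · exact (mul_pos four_pos hs0).ne'
      · apply ContinuousWithinAt.log
        · apply ContinuousWithinAt.div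
          · exact (continuous_const.add Real.continuous_sqrt).continuousWithinAt
          · exact (continuous_const.sub Real.continuous_sqrt).continuousWithinAt
          · exact h1m.ne'
        · exact (div_pos h1p h1m).ne'
    rw [uIoc_of_le (zero_le_one' ℝ), ← Measure.restrict_congr_set Ioo_ae_eq_Ioc]
    exact hco.aestronglyMeasurable measurableSet_Ioo
  · -- bound
    rw [uIoc_of_le (zero_le_one' ℝ), ← Measure.restrict_congr_set Ioo_ae_eq_Ioc]
    refine (ae_restrict_iff' measurableSet_Ioo).2 (Filter.Eventually.of_forall fun t ht => ?_)
    obtain ⟨ht0, ht1⟩ := ht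
    set u := Real.sqrt t with hu
    set v := Real.sqrt (1-t) with hv
    have hu0 : 0 < u := Real.sqrt_pos.2 ht0
    have hu1 : u < 1 := sqrt_lt_one' ht1
    have hv0 : 0 < v := Real.sqrt_pos.2 (by linarith)
    have hv1 : v ≤ 1 := by
      rw [hv]
      exact Real.sqrt_le_one.2 (by linarith)
    have hu2 : u^2 = t := Real.sq_sqrt ht0.le
    have hv2 : v^2 = 1 - t := Real.sq_sqrt (by linarith)
    have h1mu : (0:ℝ) < 1 - u := by linarith
    have h1pu : (0:ℝ) < 1 + u := by linarith
    -- rewrite log of quotient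
    have hlog : Real.log ((1+u)/(1-u)) = Real.log (1+u) - Real.log (1-u) :=
      Real.log_div h1pu.ne' h1mu.ne'
    -- bounds on logs
    have hlog1 : Real.log (1+u) ≤ 1 := by
      have := Real.log_le_sub_one_of_pos h1pu
      linarith
    have hlog2 : -Real.log (1-u) ≤ 2 / Real.sqrt (1-u) := neg_log_le_aux h1mu
    have hsu : 0 < Real.sqrt (1-u) := Real.sqrt_pos.2 h1mu
    have hvle : v ≤ Real.sqrt 2 * Real.sqrt (1-u) := by
      rw [hv, ← Real.sqrt_mul (by norm_num : (0:ℝ) ≤ 2)]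
      apply Real.sqrt_le_sqrt
      nlinarith
    have hsqrt2 : Real.sqrt 2 ≤ 3/2 := by
      nlinarith [Real.sq_sqrt (by norm_num : (0:ℝ) ≤ 2), Real.sqrt_nonneg 2]
    have hlog2' : -Real.log (1-u) ≤ 3 / v := by
      have h23 : 2 / Real.sqrt (1-u) ≤ 3 / v := by
        rw [div_le_div_iff₀ hsu hv0]
        nlinarith
      linarith
    have hL : Real.log ((1+u)/(1-u)) ≤ 1 + 3 / v := by
      rw [hlog]; linarith
    have hLnn : 0 ≤ Real.log ((1+u)/(1-u)) := by
      rw [hlog]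
      have := Real.log_nonneg (by linarith : (1:ℝ) ≤ 1+u)
      have := Real.log_nonpos (by linarith) (by linarith : 1-u ≤ 1)
      linarith
    have hfnn : 0 ≤ 1/(4*u) * Real.log ((1+u)/(1-u)) := by positivity
    show ‖1/(4*u) * Real.log ((1+u)/(1-u))‖ ≤ 2*(t ^ (-(1/2):ℝ) + (1-t) ^ (-(1/2):ℝ))
    rw [Real.norm_eq_abs, abs_of_nonneg hfnn]
    -- rpow rewrites
    have hrt : t ^ (-(1/2):ℝ) = 1 / u := by
      rw [Real.rpow_neg ht0.le, hu, Real.sqrt_eq_rpow]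
      norm_num
    have hrt2 : (1-t) ^ (-(1/2):ℝ) = 1 / v := by
      rw [Real.rpow_neg (by linarith : (0:ℝ) ≤ 1-t), hv, Real.sqrt_eq_rpow]
      norm_num
    rw [hrt, hrt2]
    have step1 : 1/(4*u) * Real.log ((1+u)/(1-u)) ≤ 1/(4*u) * (1 + 3/v) := by
      apply mul_le_mul_of_nonneg_left hL (by positivity)
    have step2 : 1/(4*u) * (1 + 3/v) ≤ 2 * (1/u + 1/v) := by
      have h3 : v + 3 ≤ 8*v + 8*u := by
        nlinarith [hu2, hv2, mul_nonneg hv0.le (sub_nonneg.2 hv1),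
          mul_nonneg hu0.le (sub_nonneg.2 hu1.le), sq_nonneg u]
      have e3 : 1/(4*u) * (1 + 3/v) = (v+3)/(4*(u*v)) := by
        have h : (1:ℝ) + 3/v = (v+3)/v := by field_simp
        rw [h, div_mul_div_comm, one_mul]
        ring_nf
      have e4 : 2 * (1/u + 1/v) = (8*v + 8*u)/(4*(u*v)) := by
        rw [div_add_div _ _ hu0.ne' hv0.ne', eq_div_iff (by positivity)]
        field_simp
        ring
      rw [e3, e4, div_le_div_iff₀ (by positivity) (by positivity)]
      exact mul_le_mul_of_nonneg_right h3 (by positivity : (0:ℝ) ≤ 4*(u*v))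
    linarith

private lemma f'_integral :
    (∫ t in (0:ℝ)..1, 1/(4*Real.sqrt t) * Real.log ((1+Real.sqrt t)/(1-Real.sqrt t)))
      = Real.log 2 := by
  set G : ℝ → ℝ := fun t =>
    ((1+Real.sqrt t) * Real.log (1+Real.sqrt t) +
      (1-Real.sqrt t) * Real.log (1-Real.sqrt t)) / 2 with hG
  have hcont : ContinuousOn G (Icc 0 1) := by
    apply Continuous.continuousOn
    exact ((Real.continuous_mul_log.comp (continuous_const.add Real.continuous_sqrt)).add
      (Real.continuous_mul_log.comp (continuous_const.sub Real.continuous_sqrt))).div_const 2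
  have hderiv : ∀ t ∈ Ioo (0:ℝ) 1, HasDerivWithinAt G
      (1/(4*Real.sqrt t) * Real.log ((1+Real.sqrt t)/(1-Real.sqrt t))) (Ioi t) t := by
    intro t ht
    obtain ⟨ht0, ht1⟩ := ht
    have hs0 : 0 < Real.sqrt t := Real.sqrt_pos.2 ht0
    have hs1 : Real.sqrt t < 1 := sqrt_lt_one' ht1
    have h1p : (0:ℝ) < 1 + Real.sqrt t := by linarith
    have h1m : (0:ℝ) < 1 - Real.sqrt t := by linarith
    have hsq : HasDerivAt Real.sqrt (1/(2*Real.sqrt t)) t := Real.hasDerivAt_sqrt ht0.ne'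
    have hA : HasDerivAt (fun t => (1+Real.sqrt t) * Real.log (1+Real.sqrt t))
        ((Real.log (1+Real.sqrt t) + 1) * (1/(2*Real.sqrt t))) t :=
      by have := (Real.hasDerivAt_mul_log h1p.ne').comp t (hsq.const_add 1); exact this
    have hB : HasDerivAt (fun t => (1-Real.sqrt t) * Real.log (1-Real.sqrt t))
        ((Real.log (1-Real.sqrt t) + 1) * -(1/(2*Real.sqrt t))) t :=
      by have := (Real.hasDerivAt_mul_log h1m.ne').comp t (hsq.const_sub 1); exact this
    have hGt : HasDerivAt G
        (((Real.log (1+Real.sqrt t) + 1) * (1/(2*Real.sqrt t)) +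
          (Real.log (1-Real.sqrt t) + 1) * -(1/(2*Real.sqrt t))) / 2) t := (hA.add hB).div_const 2
    have heq : ((Real.log (1+Real.sqrt t) + 1) * (1/(2*Real.sqrt t)) +
          (Real.log (1-Real.sqrt t) + 1) * -(1/(2*Real.sqrt t))) / 2
        = 1/(4*Real.sqrt t) * Real.log ((1+Real.sqrt t)/(1-Real.sqrt t)) := by
      rw [Real.log_div h1p.ne' h1m.ne']
      field_simp
      ring
    rw [heq] at hGt
    exact hGt.hasDerivWithinAt
  rw [intervalIntegral.integral_eq_sub_of_hasDeriv_right_of_le zero_le_one hcont hderiv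
    f'_integrable]
  simp only [hG, Real.sqrt_one, Real.sqrt_zero]
  norm_num

/-- For `0 < a ≤ b`,
`∫₀¹ (a/(4√t)) log((b + a√t)/(b − a√t)) dt ≤ (a²/b)·log 2`. -/
theorem log_integral_ineq (a b : ℝ) (ha : 0 < a) (hab : a ≤ b) :
    (∫ t in (0:ℝ)..1,
        a / (4 * Real.sqrt t) *
          Real.log ((b + a * Real.sqrt t) / (b - a * Real.sqrt t)))
      ≤ a ^ 2 / b * Real.log 2 := by
  have hb : 0 < b := lt_of_lt_of_le ha hab
  set f' : ℝ → ℝ := fun t => 1/(4*Real.sqrt t) * Real.log ((1+Real.sqrt t)/(1-Real.sqrt t))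
    with hf'
  have hint : IntervalIntegrable f' volume 0 1 := f'_integrable
  have hint2 : IntervalIntegrable (fun t => a^2/b * f' t) volume 0 1 := hint.const_mul _
  -- pointwise inequality on Ioo 0 1
  have hpt : ∀ t ∈ Ioo (0:ℝ) 1,
      a / (4*Real.sqrt t) * Real.log ((b + a*Real.sqrt t)/(b - a*Real.sqrt t))
        ≤ a^2/b * f' t := by
    intro t ht
    obtain ⟨ht0, ht1⟩ := ht
    set u := Real.sqrt t with hu
    have hu0 : 0 < u := Real.sqrt_pos.2 ht0
    have hu1 : u < 1 := sqrt_lt_one' ht1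
    have hx0 : 0 < a/b := by positivity
    have hx1 : a/b ≤ 1 := (div_le_one hb).2 hab
    have hbau : 0 < b - a*u := by nlinarith
    have hbau' : 0 < b + a*u := by positivity
    have hxu : a/b * u < 1 := by
      calc a/b * u ≤ 1 * u := by apply mul_le_mul_of_nonneg_right hx1 hu0.le
        _ < 1 := by linarith
    have hquot : (b + a*u)/(b - a*u) = (1 + (a/b)*u)/(1 - (a/b)*u) := by
      rw [div_eq_div_iff hbau.ne' (by linarith : (0:ℝ) < 1 - a/b*u).ne']
      field_simp
    have hkey := key_log_ineq hx0 hx1 hu0.le hu1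
    have h1pxu : (0:ℝ) < 1 + (a/b)*u := by positivity
    have h1mxu : (0:ℝ) < 1 - (a/b)*u := by linarith
    have h1pu : (0:ℝ) < 1 + u := by linarith
    have h1mu : (0:ℝ) < 1 - u := by linarith
    rw [hquot, Real.log_div h1pxu.ne' h1mxu.ne']
    have hfeq : f' t = 1/(4*u) * (Real.log (1+u) - Real.log (1-u)) := by
      rw [hf']
      simp only
      rw [Real.log_div h1pu.ne' h1mu.ne']
    rw [hfeq]
    calc a / (4*u) * (Real.log (1 + a/b*u) - Real.log (1 - a/b*u))
        ≤ a / (4*u) * (a/b * (Real.log (1+u) - Real.log (1-u))) := by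
          apply mul_le_mul_of_nonneg_left hkey (by positivity)
      _ = a^2/b * (1/(4*u) * (Real.log (1+u) - Real.log (1-u))) := by
          field_simp
  -- integrability of LHS
  have hmeasL : AEStronglyMeasurable
      (fun t => a / (4*Real.sqrt t) * Real.log ((b + a*Real.sqrt t)/(b - a*Real.sqrt t)))
      (volume.restrict (Set.uIoc (0:ℝ) 1)) := by
    have hco : ContinuousOn
        (fun t => a / (4*Real.sqrt t) * Real.log ((b + a*Real.sqrt t)/(b - a*Real.sqrt t)))
        (Ioo (0:ℝ) 1) := by
      intro t ht
      obtain ⟨ht0, ht1⟩ := ht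
      have hs0 : 0 < Real.sqrt t := Real.sqrt_pos.2 ht0
      have hs1 : Real.sqrt t < 1 := sqrt_lt_one' ht1
      have hbau : 0 < b - a*Real.sqrt t := by nlinarith
      apply ContinuousWithinAt.mul
      · apply ContinuousWithinAt.div continuousWithinAt_const
        · exact (continuous_const.mul Real.continuous_sqrt).continuousWithinAt
        · positivity
      · apply ContinuousWithinAt.log
        · apply ContinuousWithinAt.div
          · exact (continuous_const.add (continuous_const.mul
              Real.continuous_sqrt)).continuousWithinAt
          · exact (continuous_const.sub (continuous_const.mul
              Real.continuous_sqrt)).continuousWithinAt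
          · exact hbau.ne'
        · positivity
    rw [uIoc_of_le (zero_le_one' ℝ), ← Measure.restrict_congr_set Ioo_ae_eq_Ioc]
    exact hco.aestronglyMeasurable measurableSet_Ioo
  have hnnL : ∀ t ∈ Ioo (0:ℝ) 1,
      0 ≤ a / (4*Real.sqrt t) * Real.log ((b + a*Real.sqrt t)/(b - a*Real.sqrt t)) := by
    intro t ht
    obtain ⟨ht0, ht1⟩ := ht
    have hs0 : 0 < Real.sqrt t := Real.sqrt_pos.2 ht0
    have hs1 : Real.sqrt t < 1 := sqrt_lt_one' ht1
    have hbau : 0 < b - a*Real.sqrt t := by nlinarith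
    have : (1:ℝ) ≤ (b + a*Real.sqrt t)/(b - a*Real.sqrt t) := by
      rw [le_div_iff₀ hbau]
      nlinarith
    have := Real.log_nonneg this
    positivity
  have hnnf' : ∀ t ∈ Ioo (0:ℝ) 1, 0 ≤ f' t := by
    intro t ht
    obtain ⟨ht0, ht1⟩ := ht
    have hs0 : 0 < Real.sqrt t := Real.sqrt_pos.2 ht0
    have hs1 : Real.sqrt t < 1 := sqrt_lt_one' ht1
    have h1mu : (0:ℝ) < 1 - Real.sqrt t := by linarith
    have h1 : (1:ℝ) ≤ (1 + Real.sqrt t)/(1 - Real.sqrt t) := by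
      rw [le_div_iff₀ h1mu]
      nlinarith
    have := Real.log_nonneg h1
    rw [hf']
    positivity
  have hintL : IntervalIntegrable
      (fun t => a / (4*Real.sqrt t) * Real.log ((b + a*Real.sqrt t)/(b - a*Real.sqrt t)))
      volume 0 1 := by
    apply hint2.mono_fun hmeasL
    rw [uIoc_of_le (zero_le_one' ℝ), ← Measure.restrict_congr_set Ioo_ae_eq_Ioc]
    refine (ae_restrict_iff' measurableSet_Ioo).2 (Filter.Eventually.of_forall fun t ht => ?_)
    simp only [Real.norm_eq_abs]
    rw [abs_of_nonneg (hnnL t ht),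
      abs_of_nonneg (by have := hnnf' t ht; positivity : 0 ≤ a^2/b * f' t)]
    exact hpt t ht
  have hmono : (∫ t in (0:ℝ)..1,
        a / (4*Real.sqrt t) * Real.log ((b + a*Real.sqrt t)/(b - a*Real.sqrt t)))
      ≤ ∫ t in (0:ℝ)..1, a^2/b * f' t := by
    apply intervalIntegral.integral_mono_ae_restrict zero_le_one hintL hint2
    rw [← Measure.restrict_congr_set Ioo_ae_eq_Icc]
    exact (ae_restrict_iff' measurableSet_Ioo).2 (Filter.Eventually.of_forall hpt)
  calc (∫ t in (0:ℝ)..1,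
        a / (4*Real.sqrt t) * Real.log ((b + a*Real.sqrt t)/(b - a*Real.sqrt t)))
      ≤ ∫ t in (0:ℝ)..1, a^2/b * f' t := hmono
    _ = a^2/b * ∫ t in (0:ℝ)..1, f' t := intervalIntegral.integral_const_mul _ _
    _ = a^2/b * Real.log 2 := by rw [hf', f'_integral]
end

section
/- The fermionic Malliavin derivative D_t and divergence δ satisfy the canonical anti-commutation relation: for h ∈ L²(ℝ₊), f ∈ Λ_p, and the element h ⊗ J_p(f), one has D_t(δ(h ⊗ J_p(f))) + δ(h ⊗ D_t(J_p(f))) = h(t)·J_p(f). -/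
open MeasureTheory

/-- Safe indexing of a finite tuple of reals by a natural number (`0` out of range). -/
noncomputable def pad {n : ℕ} (t : Fin n → ℝ) (i : ℕ) : ℝ :=
  if h : i < n then t ⟨i, h⟩ else 0

/-- The `r`-fold contraction `(f ∧_r g)(t₁,…,t_{p+q−2r})
  = ∫ f(t₁,…,t_{p−r}, s_r,…,s₁) g(s₁,…,s_r, t_{p−r+1},…,t_{p+q−2r}) ds`. -/
noncomputable def contrN (p q r : ℕ) (f : (Fin p → ℝ) → ℂ) (g : (Fin q → ℝ) → ℂ) :
    (Fin (p + q - 2 * r) → ℝ) → ℂ := fun t =>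
  ∫ s : Fin r → ℝ,
    f (fun i => if (i : ℕ) < p - r then pad t (i : ℕ) else pad s (p - 1 - (i : ℕ))) *
    g (fun j => if (j : ℕ) < r then pad s (j : ℕ) else pad t (p - 2 * r + (j : ℕ)))

/-- Anti-symmetrization `ĥ(t₁,…,tₙ) = (1/n!) Σ_{σ∈Sₙ} sgn(σ) h(t_{σ(1)},…,t_{σ(n)})`. -/
noncomputable def asymN {n : ℕ} (h : (Fin n → ℝ) → ℂ) : (Fin n → ℝ) → ℂ := fun t =>
  (n.factorial : ℂ)⁻¹ * ∑ σ : Equiv.Perm (Fin n), ((Equiv.Perm.sign σ : ℤ) : ℂ) * h (t ∘ σ)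

/-- The anti-symmetrized `r`-fold contraction `f ∧̂_r g`. -/
noncomputable def contrHat (p q r : ℕ) (f : (Fin p → ℝ) → ℂ) (g : (Fin q → ℝ) → ℂ) :
    (Fin (p + q - 2 * r) → ℝ) → ℂ :=
  asymN (contrN p q r f g)

/-- `f` is anti-symmetric (i.e. `f ∈ Λ_n` as a pointwise condition). -/
def IsAntisym {n : ℕ} (f : (Fin n → ℝ) → ℂ) : Prop :=
  ∀ (σ : Equiv.Perm (Fin n)) (x : Fin n → ℝ), f (x ∘ σ) = ((Equiv.Perm.sign σ : ℤ) : ℂ) * f x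

/-- `sub1 n f t = f(t, ·)`: fixing the first variable of `f` at `t`. -/
noncomputable def sub1 (n : ℕ) (f : (Fin n → ℝ) → ℂ) (t : ℝ) : (Fin (n - 1) → ℝ) → ℂ :=
  fun y => f (fun i => if (i : ℕ) = 0 then t else pad y ((i : ℕ) - 1))

lemma sum_perm_succ {n : ℕ} (G : Equiv.Perm (Fin (n+1)) → ℂ) :
    ∑ σ : Equiv.Perm (Fin (n+1)), G σ
      = ∑ a : Fin (n+1), ∑ e : Equiv.Perm (Fin n), G (Equiv.Perm.decomposeFin.symm (a, e)) := by
  rw [← Equiv.sum_comp Equiv.Perm.decomposeFin.symm G, Fintype.sum_prod_type]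

lemma sign_sq {n : ℕ} (e : Equiv.Perm (Fin n)) :
    (((Equiv.Perm.sign e : ℤ)) : ℂ) * ((Equiv.Perm.sign e : ℤ) : ℂ) = 1 := by
  norm_cast
  rw [Int.units_mul_self, Units.val_one]

lemma hfac (p : ℕ) : ((p:ℂ)+1) * ((Nat.factorial (p+1) : ℂ))⁻¹ * (Nat.factorial p : ℂ) = 1 := by
  rw [Nat.factorial_succ]
  push_cast
  have h1 : ((p:ℂ)+1) ≠ 0 := by
    have := (Nat.cast_ne_zero (R := ℂ)).mpr (Nat.succ_ne_zero p)
    push_cast at this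
    exact this
  have h2 : ((Nat.factorial p : ℂ)) ≠ 0 := by
    exact_mod_cast Nat.cast_ne_zero.mpr (Nat.factorial_ne_zero p)
  field_simp

lemma sumA {p : ℕ} (h : ℝ → ℂ) (f : (Fin p → ℝ) → ℂ) (hf : IsAntisym f)
    (t : ℝ) (y : Fin p → ℝ) :
    ((p:ℂ)+1) * asymN (fun x : Fin (p+1) → ℝ => h (x 0) * f (x ∘ Fin.succ)) ((Fin.cons t y : Fin (p+1) → ℝ))
    = ∑ a : Fin (p+1), (if a = 0 then 1 else -1 : ℂ) * (h ((Fin.cons t y : Fin (p+1) → ℝ) a) *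
        f ((Fin.cons t y : Fin (p+1) → ℝ) ∘ Equiv.swap 0 a ∘ Fin.succ)) := by
  unfold asymN
  rw [sum_perm_succ]
  have hterm : ∀ (a : Fin (p+1)) (e : Equiv.Perm (Fin p)),
      ((Equiv.Perm.sign (Equiv.Perm.decomposeFin.symm (a, e)) : ℤ) : ℂ) *
        (h (((Fin.cons t y : Fin (p+1) → ℝ) ∘ Equiv.Perm.decomposeFin.symm (a, e)) 0) *
         f (((Fin.cons t y : Fin (p+1) → ℝ) ∘ Equiv.Perm.decomposeFin.symm (a, e)) ∘ Fin.succ))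
      = (if a = 0 then 1 else -1 : ℂ) * (h ((Fin.cons t y : Fin (p+1) → ℝ) a) *
          f ((Fin.cons t y : Fin (p+1) → ℝ) ∘ Equiv.swap 0 a ∘ Fin.succ)) := by
    intro a e
    have hcomp : (((Fin.cons t y : Fin (p+1) → ℝ) ∘ Equiv.Perm.decomposeFin.symm (a, e)) ∘ Fin.succ)
        = ((Fin.cons t y : Fin (p+1) → ℝ) ∘ Equiv.swap 0 a ∘ Fin.succ) ∘ e := by
      funext i
      simp [Function.comp, Equiv.Perm.decomposeFin_symm_apply_succ]
    rw [hcomp, hf e, Equiv.Perm.decomposeFin.symm_sign]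
    simp only [Function.comp_apply, Equiv.Perm.decomposeFin_symm_apply_zero]
    have hsq : (((Equiv.Perm.sign e : ℤ)) : ℂ)^2 = 1 := by rw [sq]; exact sign_sq e
    push_cast
    split_ifs with ha
    · subst ha; ring_nf; rw [hsq]; simp
    · ring_nf; rw [hsq]; push_cast; ring
  have h2 : ∀ a : Fin (p+1),
      (∑ e : Equiv.Perm (Fin p),
        ((Equiv.Perm.sign (Equiv.Perm.decomposeFin.symm (a, e)) : ℤ) : ℂ) *
          ((fun x : Fin (p+1) → ℝ => h (x 0) * f (x ∘ Fin.succ))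
            ((Fin.cons t y : Fin (p+1) → ℝ) ∘ Equiv.Perm.decomposeFin.symm (a, e))))
      = (Nat.factorial p : ℂ) * ((if a = 0 then 1 else -1 : ℂ) *
          (h ((Fin.cons t y : Fin (p+1) → ℝ) a) *
           f ((Fin.cons t y : Fin (p+1) → ℝ) ∘ Equiv.swap 0 a ∘ Fin.succ))) := by
    intro a
    rw [Finset.sum_congr rfl (fun e _ => hterm a e), Finset.sum_const, Finset.card_univ,
      Fintype.card_perm, nsmul_eq_mul]
    simp
  simp_rw [h2]
  rw [← Finset.mul_sum, ← mul_assoc, ← mul_assoc, hfac, one_mul]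

lemma sumB {m : ℕ} (h : ℝ → ℂ) (f : (Fin (m+1) → ℝ) → ℂ) (hf : IsAntisym f)
    (t : ℝ) (y : Fin (m+1) → ℝ) :
    asymN (fun x : Fin (m+1) → ℝ =>
        ((m:ℂ)+1) * h (x 0) * f (Fin.cons t (x ∘ Fin.succ) : Fin (m+1) → ℝ)) y
    = ∑ a : Fin (m+1), (if a = 0 then 1 else -1 : ℂ) *
        (h (y a) * f (Fin.cons t (y ∘ Equiv.swap 0 a ∘ Fin.succ) : Fin (m+1) → ℝ)) := by
  unfold asymN
  rw [sum_perm_succ]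
  have hterm : ∀ (a : Fin (m+1)) (e : Equiv.Perm (Fin m)),
      ((Equiv.Perm.sign (Equiv.Perm.decomposeFin.symm (a, e)) : ℤ) : ℂ) *
        (((m:ℂ)+1) * h ((y ∘ Equiv.Perm.decomposeFin.symm (a, e)) 0) *
          f (Fin.cons t ((y ∘ Equiv.Perm.decomposeFin.symm (a, e)) ∘ Fin.succ) : Fin (m+1) → ℝ))
      = ((m:ℂ)+1) * ((if a = 0 then 1 else -1 : ℂ) *
          (h (y a) * f (Fin.cons t (y ∘ Equiv.swap 0 a ∘ Fin.succ) : Fin (m+1) → ℝ))) := by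
    intro a e
    have hcomp : (Fin.cons t ((y ∘ Equiv.Perm.decomposeFin.symm (a, e)) ∘ Fin.succ)
          : Fin (m+1) → ℝ)
        = (Fin.cons t (y ∘ Equiv.swap 0 a ∘ Fin.succ) : Fin (m+1) → ℝ) ∘
            Equiv.Perm.decomposeFin.symm ((0 : Fin (m+1)), e) := by
      funext i
      refine Fin.cases ?_ ?_ i
      · simp
      · intro j
        simp [Function.comp, Equiv.Perm.decomposeFin_symm_apply_succ]
    rw [hcomp, hf (Equiv.Perm.decomposeFin.symm ((0 : Fin (m+1)), e)),
      Equiv.Perm.decomposeFin.symm_sign, Equiv.Perm.decomposeFin.symm_sign]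
    simp only [Function.comp_apply, Equiv.Perm.decomposeFin_symm_apply_zero, if_pos rfl,
      one_mul]
    have hsq : (((Equiv.Perm.sign e : ℤ)) : ℂ)^2 = 1 := by rw [sq]; exact sign_sq e
    push_cast
    split_ifs with ha
    · subst ha; ring_nf; rw [hsq]; simp
    · ring_nf; rw [hsq]; push_cast; ring
  have h2 : ∀ a : Fin (m+1),
      (∑ e : Equiv.Perm (Fin m),
        ((Equiv.Perm.sign (Equiv.Perm.decomposeFin.symm (a, e)) : ℤ) : ℂ) *
          ((fun x : Fin (m+1) → ℝ =>
              ((m:ℂ)+1) * h (x 0) * f (Fin.cons t (x ∘ Fin.succ) : Fin (m+1) → ℝ))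
            (y ∘ Equiv.Perm.decomposeFin.symm (a, e))))
      = ((Nat.factorial m : ℂ) * ((m:ℂ)+1)) * ((if a = 0 then 1 else -1 : ℂ) *
          (h (y a) * f (Fin.cons t (y ∘ Equiv.swap 0 a ∘ Fin.succ) : Fin (m+1) → ℝ))) := by
    intro a
    rw [Finset.sum_congr rfl (fun e _ => hterm a e), Finset.sum_const, Finset.card_univ,
      Fintype.card_perm, nsmul_eq_mul, ← mul_assoc]
    simp
  simp_rw [h2]
  rw [← Finset.mul_sum, ← mul_assoc]
  have hkey : ((Nat.factorial (m+1) : ℂ))⁻¹ * ((Nat.factorial m : ℂ) * ((m:ℂ)+1)) = 1 := by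
    have := hfac m
    linear_combination this
  rw [hkey, one_mul]

lemma match_term {m : ℕ} (f : (Fin (m+1) → ℝ) → ℂ) (hf : IsAntisym f)
    (t : ℝ) (y : Fin (m+1) → ℝ) (b : Fin (m+1)) :
    f ((Fin.cons t y : Fin (m+2) → ℝ) ∘ Equiv.swap 0 b.succ ∘ Fin.succ)
    = (if b = 0 then 1 else -1 : ℂ) *
        f (Fin.cons t (y ∘ Equiv.swap 0 b ∘ Fin.succ) : Fin (m+1) → ℝ) := by
  have hcomp : ((Fin.cons t y : Fin (m+2) → ℝ) ∘ Equiv.swap 0 b.succ ∘ Fin.succ)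
      = (Fin.cons t (y ∘ Equiv.swap 0 b ∘ Fin.succ) : Fin (m+1) → ℝ) ∘ Equiv.swap 0 b := by
    funext i
    have hL : ((Fin.cons t y : Fin (m+2) → ℝ) ∘ Equiv.swap 0 b.succ ∘ Fin.succ) i
        = if i = b then t else y i := by
      rcases eq_or_ne i b with rfl | hib
      · simp [Equiv.swap_apply_right]
      · have h1 : Equiv.swap (0 : Fin (m+2)) b.succ i.succ = i.succ :=
          Equiv.swap_apply_of_ne_of_ne (Fin.succ_ne_zero i)
            (by simpa [Fin.succ_inj] using hib)
        simp [Function.comp, h1, hib]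
    have hR : ((Fin.cons t (y ∘ Equiv.swap 0 b ∘ Fin.succ) : Fin (m+1) → ℝ) ∘
          Equiv.swap 0 b) i = if i = b then t else y i := by
      rcases eq_or_ne i b with rfl | hib
      · simp [Equiv.swap_apply_right]
      · rcases eq_or_ne i 0 with rfl | hi0
        · have hb0 : b ≠ 0 := fun hb => hib hb.symm
          obtain ⟨b', rfl⟩ := Fin.eq_succ_of_ne_zero hb0
          simp [Function.comp, Equiv.swap_apply_left, Equiv.swap_apply_right, hib]
        · obtain ⟨j, rfl⟩ := Fin.eq_succ_of_ne_zero hi0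
          have h1 : Equiv.swap (0 : Fin (m+1)) b j.succ = j.succ :=
            Equiv.swap_apply_of_ne_of_ne hi0 hib
          simp [Function.comp, h1, hib]
    rw [hL, hR]
  rw [hcomp, hf (Equiv.swap 0 b)]
  congr 1
  rcases eq_or_ne b 0 with rfl | hb
  · simp
  · rw [Equiv.Perm.sign_swap (fun hc => hb hc.symm)]
    simp [hb]

/-- The canonical anti-commutation relation between the fermionic Malliavin derivative
and divergence: `D_t(δ(h ⊗ J_p(f))) + δ(h ⊗ D_t(J_p(f))) = h(t)·J_p(f)`.
Here `δ(h ⊗ J_p(f)) = J_{p+1}` of the full anti-symmetrization of `(s,x) ↦ h(s)f(x)`,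
`D_t(J_n(v)) = n·J_{n−1}(v(t,·))`, and
`δ(h ⊗ D_t(J_p(f))) = J_p` of the full anti-symmetrization of `(s,y) ↦ p·h(s)·f(t,y)`. -/
theorem clifford_malliavin_car (M : Type*) [AddCommGroup M] [Module ℂ M]
    (J : (n : ℕ) → ((Fin n → ℝ) → ℂ) →ₗ[ℂ] M)
    (p : ℕ) (h : ℝ → ℂ) (hh : MemLp h 2 (volume : Measure ℝ))
    (f : (Fin p → ℝ) → ℂ) (hf : IsAntisym f)
    (hf2 : MemLp f 2 (volume : Measure (Fin p → ℝ))) :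
    ∀ t : ℝ,
      ((p : ℂ) + 1) •
          J p (sub1 (p + 1)
            (asymN (fun x : Fin (p + 1) → ℝ => h (x 0) * f (x ∘ Fin.succ))) t)
        + J p (asymN (fun x : Fin p → ℝ =>
            (p : ℂ) * h (pad x 0) * sub1 p f t (fun i => pad x ((i : ℕ) + 1))))
        = h t • J p f := by
  intro t
  rw [← _root_.map_smul, ← map_add, ← _root_.map_smul]
  congr 1
  funext y
  simp only [Pi.add_apply, Pi.smul_apply, smul_eq_mul]
  have hA : sub1 (p + 1)
      (asymN (fun x : Fin (p + 1) → ℝ => h (x 0) * f (x ∘ Fin.succ))) t y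
      = asymN (fun x : Fin (p + 1) → ℝ => h (x 0) * f (x ∘ Fin.succ))
          (Fin.cons t y : Fin (p+1) → ℝ) := by
    have hz : (fun i : Fin (p+1) => if (i : ℕ) = 0 then t else pad y ((i : ℕ) - 1))
        = (Fin.cons t y : Fin (p+1) → ℝ) := by
      funext i
      refine Fin.cases ?_ ?_ i
      · simp
      · intro j
        simp [pad, Fin.val_succ]
    simp only [sub1]
    rw [hz]
  rw [hA]
  obtain _ | m := p
  · rw [sumA h f hf t y]
    have hB0 : asymN (fun x : Fin 0 → ℝ =>
        ((0:ℕ) : ℂ) * h (pad x 0) * sub1 0 f t (fun i => pad x ((i : ℕ) + 1))) y = 0 := by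
      unfold asymN; simp
    rw [hB0, add_zero, Fin.sum_univ_one]
    have h3 : ((Fin.cons t y : Fin 1 → ℝ) ∘ Equiv.swap 0 0 ∘ Fin.succ) = y :=
      Subsingleton.elim _ _
    have h4 : ((Fin.cons t y : Fin 1 → ℝ) ∘ Fin.succ) = y := Subsingleton.elim _ _
    simp [h3, h4]
  · have hB' : (fun x : Fin (m+1) → ℝ =>
        ((m+1 : ℕ) : ℂ) * h (pad x 0) * sub1 (m+1) f t (fun i => pad x ((i : ℕ) + 1)))
        = fun x : Fin (m+1) → ℝ =>
            ((m:ℂ)+1) * h (x 0) * f (Fin.cons t (x ∘ Fin.succ) : Fin (m+1) → ℝ) := by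
      funext x
      have h1 : pad x 0 = x 0 := by simp [pad]
      have h2 : (fun i : Fin (m+1) => if (i : ℕ) = 0 then t
            else pad (fun j : Fin (m + 1 - 1) => pad x ((j : ℕ) + 1)) ((i : ℕ) - 1))
          = (Fin.cons t (x ∘ Fin.succ) : Fin (m+1) → ℝ) := by
        funext i
        refine Fin.cases ?_ ?_ i
        · simp
        · intro j
          simp only [pad, Fin.val_succ, Nat.add_sub_cancel, Nat.succ_ne_zero, if_false]
          have hlt : (j : ℕ) + 1 < m + 1 := by
            have := j.isLt
            omega
          rw [dif_pos j.isLt, dif_pos hlt]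
          exact (Fin.cons_succ (α := fun _ => ℝ) t (x ∘ Fin.succ) j).symm
      simp only [sub1]
      rw [h1, h2]
      push_cast
      ring
    rw [hB', sumB h f hf t y, sumA h f hf t y, Fin.sum_univ_succ]
    have hy0 : ((Fin.cons t y : Fin (m+2) → ℝ) ∘ Equiv.swap 0 0 ∘ Fin.succ) = y := by
      funext j
      simp [Equiv.swap_self]
    have hsub : ∀ b : Fin (m+1),
        (if (b.succ : Fin (m+2)) = 0 then (1:ℂ) else -1) *
          (h ((Fin.cons t y : Fin (m+2) → ℝ) b.succ) *
            f ((Fin.cons t y : Fin (m+2) → ℝ) ∘ Equiv.swap 0 b.succ ∘ Fin.succ))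
        = -((if b = 0 then (1:ℂ) else -1) *
            (h (y b) * f (Fin.cons t (y ∘ Equiv.swap 0 b ∘ Fin.succ) : Fin (m+1) → ℝ))) := by
      intro b
      rw [if_neg (Fin.succ_ne_zero b), Fin.cons_succ, match_term f hf t y b]
      ring
    rw [Finset.sum_congr rfl (fun b _ => hsub b), hy0]
    simp [Fin.cons_zero]
end
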